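/- arXiv:2309.09931 — 3 statements merged into one kernel-verified Lean document; each statement's English description precedes it below -/
import Mathlib

section
/- The rewrite system R' obtained by orienting the equations x+e=x, e+x=x, (x+y)+z=x+(y+z), (x+y)·z=y·(x·z), d·x=(w·x)+x, e·x=x, w·(x+y)=(w·x)+(w·y), (w·x)·y=y+x, w·e=e left-to-right is terminating and confluent. -/
/-- Ground terms over constants d, w, e with binary operations + (add) and · (app). -/
inductive Tm : Type
  | d : Tm
  | w : Tm
  | e : Tm
  | add : Tm → Tm → Tm
  | app : Tm → Tm → Tm
  deriving DecidableEq

open Tm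

/-- Root rewrite steps: instances of the oriented equations of E'. -/
inductive Root : Tm → Tm → Prop
  | addE (x) : Root (add x e) x
  | eAdd (x) : Root (add e x) x
  | assoc (x y z) : Root (add (add x y) z) (add x (add y z))
  | appAdd (x y z) : Root (app (add x y) z) (app y (app x z))
  | dx (x) : Root (app d x) (add (app w x) x)
  | appE (x) : Root (app e x) x
  | wAdd (x y) : Root (app w (add x y)) (add (app w x) (app w y))
  | wApp (x y) : Root (app (app w x) y) (add y x)
  | wE : Root (app w e) e

/-- One rewrite step: a root step applied at some subterm position. -/
inductive Step : Tm → Tm → Prop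
  | root {t u} : Root t u → Step t u
  | addL {t t' u} : Step t t' → Step (add t u) (add t' u)
  | addR {t u u'} : Step u u' → Step (add t u) (add t u')
  | appL {t t' u} : Step t t' → Step (app t u) (app t' u)
  | appR {t u u'} : Step u u' → Step (app t u) (app t u')

/-- Zero or more rewrite steps. -/
def Steps : Tm → Tm → Prop := Relation.ReflTransGen Step

/-- A normal form is a term to which no rule applies. -/
def NormalForm (t : Tm) : Prop := ∀ u, ¬ Step t u

/-- Provable equality in the equational theory E'. -/
def TermEq : Tm → Tm → Prop := Relation.EqvGen Step

/-! ### Termination measure -/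

def phi1 : Tm → ℕ
  | d => 2
  | w => 1
  | e => 1
  | add a b => 2 * phi1 a + phi1 b
  | app a b => 3 ^ phi1 a * phi1 b

def phi2 : Tm → ℕ
  | d => 0
  | w => 0
  | e => 0
  | add a b => phi2 a + phi2 b + 1
  | app a b => phi2 a + 2 * phi2 b

lemma phi1_pos : ∀ t, 1 ≤ phi1 t := by
  intro t
  induction t with
  | d => simp [phi1]
  | w => simp [phi1]
  | e => simp [phi1]
  | add a b ha hb => simp [phi1]; omega
  | app a b ha hb =>
      simp only [phi1]
      have : 1 ≤ 3 ^ phi1 a := Nat.one_le_pow _ _ (by norm_num)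
      nlinarith

lemma three_pow_ge (a : ℕ) (h : 1 ≤ a) : a + 2 ≤ 3 ^ a := by
  induction a with
  | zero => omega
  | succ n ih =>
      rcases Nat.eq_or_lt_of_le h with h1 | h1
      · simp [← h1]
      · have hn : 1 ≤ n := by omega
        have := ih hn
        have : 3 ^ (n+1) = 3 * 3 ^ n := by ring
        omega

lemma phi2_le (t : Tm) : phi2 t ≤ phi1 t := by
  induction t with
  | d => simp [phi1, phi2]
  | w => simp [phi1, phi2]
  | e => simp [phi1, phi2]
  | add a b ha hb =>
      have := phi1_pos a
      simp only [phi1, phi2]; omega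
  | app a b ha hb =>
      simp only [phi1, phi2]
      have h3 := three_pow_ge (phi1 a) (phi1_pos a)
      have hbp := phi1_pos b
      have hap := phi1_pos a
      nlinarith


lemma dec_addE (x : Tm) : phi1 x < phi1 (add x e) := by
  have := phi1_pos x; simp [phi1]; omega

lemma dec_eAdd (x : Tm) : phi1 x < phi1 (add e x) := by
  simp [phi1]

lemma dec_assoc (x y z : Tm) :
    phi1 (add x (add y z)) < phi1 (add (add x y) z) := by
  have := phi1_pos x; simp only [phi1]; omega

lemma dec_appAdd (x y z : Tm) :
    phi1 (app y (app x z)) < phi1 (app (add x y) z) := by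
  simp only [phi1]
  have hx := phi1_pos x
  have hz := phi1_pos z
  have h1 : 3 ^ (phi1 x + phi1 y) < 3 ^ (2 * phi1 x + phi1 y) :=
    Nat.pow_lt_pow_right (by norm_num) (by omega)
  calc 3 ^ phi1 y * (3 ^ phi1 x * phi1 z)
      = 3 ^ (phi1 x + phi1 y) * phi1 z := by rw [pow_add]; ring
    _ < 3 ^ (2 * phi1 x + phi1 y) * phi1 z :=
        Nat.mul_lt_mul_of_lt_of_le h1 le_rfl (by omega)

lemma dec_dx (x : Tm) : phi1 (add (app w x) x) < phi1 (app d x) := by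
  have := phi1_pos x; simp only [phi1]; norm_num; omega

lemma dec_appE (x : Tm) : phi1 x < phi1 (app e x) := by
  have := phi1_pos x; simp only [phi1]; norm_num; omega

lemma dec_wAdd1 (x y : Tm) :
    phi1 (add (app w x) (app w y)) = phi1 (app w (add x y)) := by
  simp only [phi1]; ring

lemma dec_wAdd2 (x y : Tm) :
    phi2 (add (app w x) (app w y)) < phi2 (app w (add x y)) := by
  simp only [phi2]; omega

lemma dec_wApp (x y : Tm) : phi1 (add y x) < phi1 (app (app w x) y) := by
  simp only [phi1]
  have hx := phi1_pos x
  have hy := phi1_pos y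
  have h3 : 3 ^ 1 * phi1 x + 2 <= 3 ^ (3 ^ 1 * phi1 x) :=
    three_pow_ge _ (by omega)
  nlinarith

lemma dec_wE : phi1 e < phi1 (app w e) := by simp [phi1]

lemma root_dec {t u : Tm} (h : Root t u) :
    phi1 u < phi1 t ∨ (phi1 u = phi1 t ∧ phi2 u < phi2 t) := by
  cases h with
  | addE x => exact Or.inl (dec_addE _)
  | eAdd x => exact Or.inl (dec_eAdd _)
  | assoc x y z => exact Or.inl (dec_assoc _ _ _)
  | appAdd x y z => exact Or.inl (dec_appAdd _ _ _)
  | dx x => exact Or.inl (dec_dx _)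
  | appE x => exact Or.inl (dec_appE _)
  | wAdd x y => exact Or.inr ⟨dec_wAdd1 _ _, dec_wAdd2 _ _⟩
  | wApp x y => exact Or.inl (dec_wApp _ _)
  | wE => exact Or.inl dec_wE

lemma step_dec {t u : Tm} (h : Step t u) :
    phi1 u < phi1 t ∨ (phi1 u = phi1 t ∧ phi2 u < phi2 t) := by
  induction h with
  | root hr => exact root_dec hr
  | addL h ih =>
      rcases ih with h1 | ⟨h1, h2⟩
      · left; simp only [phi1]; omega
      · right; constructor
        · simp only [phi1]; omega
        · simp only [phi2]; omega
  | addR h ih =>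
      rcases ih with h1 | ⟨h1, h2⟩
      · left; simp only [phi1]; omega
      · right; constructor
        · simp only [phi1]; omega
        · simp only [phi2]; omega
  | @appL t t' u h ih =>
      rcases ih with h1 | ⟨h1, h2⟩
      · left; simp only [phi1]
        exact Nat.mul_lt_mul_of_lt_of_le
          (Nat.pow_lt_pow_right (by norm_num) h1) le_rfl
          (Nat.lt_of_lt_of_le Nat.zero_lt_one (phi1_pos u))
      · right; constructor
        · simp only [phi1, h1]
        · simp only [phi2]; omega
  | @appR t u u' h ih =>
      rcases ih with h1 | ⟨h1, h2⟩
      · left; simp only [phi1]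
        exact Nat.mul_lt_mul_of_le_of_lt le_rfl h1
          (pow_pos (by norm_num) _)
      · right; constructor
        · simp only [phi1, h1]
        · simp only [phi2]; omega

def psi (t : Tm) : ℕ := phi1 t * phi1 t + phi2 t

lemma step_psi {t u : Tm} (h : Step t u) : psi u < psi t := by
  rcases step_dec h with h1 | ⟨h1, h2⟩
  · have h2 := phi2_le u
    have h3 := phi2_le t
    unfold psi
    nlinarith
  · unfold psi; rw [h1]; omega

lemma no_infinite_chain : ¬ ∃ f : ℕ → Tm, ∀ n : ℕ, Step (f n) (f (n + 1)) := by
  rintro ⟨f, hf⟩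
  have key : ∀ n, psi (f n) + n ≤ psi (f 0) := by
    intro n
    induction n with
    | zero => omega
    | succ n ih => have := step_psi (hf n); omega
  have := key (psi (f 0) + 1)
  omega

/-! ### Normalization -/

def addNF : Tm → Tm → Tm
  | e, y => y
  | x, e => x
  | add a b, y => addNF a (addNF b y)
  | x, y => add x y

def wt : Tm → ℕ
  | d => 2
  | w => 1
  | e => 1
  | add a b => wt a + wt b + 1
  | app a b => wt a + wt b + 1

def appNF : Tm → Tm → Tm
  | add a b, y => appNF b (appNF a y)
  | d, y => addNF (appNF w y) y
  | e, y => y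
  | w, add a b => addNF (appNF w a) (appNF w b)
  | w, e => e
  | app Tm.w a, y => addNF y a
  | x, y => app x y
termination_by x y => (wt x, sizeOf y)
decreasing_by
  all_goals simp_wf
  all_goals simp [wt, Prod.lex_iff]
  all_goals omega

def nf : Tm → Tm
  | d => d
  | w => w
  | e => e
  | add a b => addNF (nf a) (nf b)
  | app a b => appNF (nf a) (nf b)

@[simp] lemma addNF_e_left (y : Tm) : addNF e y = y := by
  cases y <;> rfl

@[simp] lemma addNF_e_right (x : Tm) : addNF x e = x := by
  cases x <;> rfl

lemma addNF_add (a b y : Tm) (hy : y ≠ e) :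
    addNF (add a b) y = addNF a (addNF b y) := by
  cases y <;> first | rfl | simp at hy

lemma addNF_other (x y : Tm) (hx1 : x ≠ e) (hx2 : ∀ a b, x ≠ add a b)
    (hy : y ≠ e) : addNF x y = add x y := by
  cases x <;> cases y <;> first | rfl | simp_all

lemma addNF_ne_e (x y : Tm) (hy : y ≠ e) : addNF x y ≠ e := by
  induction x generalizing y with
  | e => simpa
  | add a b iha ihb =>
      rw [addNF_add a b y hy]
      by_cases hb : b = e
      · subst hb; simp
        by_cases ha : a = e
        · subst ha; simpa
        · exact iha y hy
      · exact iha _ (ihb y hy)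
  | d => rw [addNF_other _ _ (by simp) (by simp) hy]; simp
  | w => rw [addNF_other _ _ (by simp) (by simp) hy]; simp
  | app f c _ _ => rw [addNF_other _ _ (by simp) (by simp) hy]; simp

lemma addNF_assoc (x y z : Tm) :
    addNF (addNF x y) z = addNF x (addNF y z) := by
  by_cases hy : y = e
  · subst hy; simp
  by_cases hz : z = e
  · subst hz; simp
  induction x generalizing y z with
  | e => simp
  | add a b iha ihb =>
      rw [addNF_add a b y hy, iha _ _ (addNF_ne_e b y hy) hz,
        ihb _ _ hy hz, addNF_add a b _ (addNF_ne_e y z hz)]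
  | d =>
      rw [addNF_other d y (by simp) (by simp) hy, addNF_add _ _ _ hz,
        addNF_other d _ (by simp) (by simp) (addNF_ne_e y z hz)]
  | w =>
      rw [addNF_other w y (by simp) (by simp) hy, addNF_add _ _ _ hz,
        addNF_other w _ (by simp) (by simp) (addNF_ne_e y z hz)]
  | app f c _ _ =>
      rw [addNF_other (app f c) y (by simp) (by simp) hy, addNF_add _ _ _ hz,
        addNF_other (app f c) _ (by simp) (by simp) (addNF_ne_e y z hz)]

@[simp] lemma appNF_add (a b y : Tm) :
    appNF (add a b) y = appNF b (appNF a y) := by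
  rw [appNF]

@[simp] lemma appNF_d (y : Tm) : appNF d y = addNF (appNF w y) y := by
  rw [appNF]

@[simp] lemma appNF_e (y : Tm) : appNF e y = y := by
  rw [appNF]

@[simp] lemma appNF_w_add (a b : Tm) :
    appNF w (add a b) = addNF (appNF w a) (appNF w b) := by
  rw [appNF]

@[simp] lemma appNF_w_e : appNF w e = e := by rw [appNF]

@[simp] lemma appNF_wApp (a y : Tm) : appNF (app w a) y = addNF y a := by
  rw [appNF]

lemma appNF_w_other (y : Tm) (h1 : y ≠ e) (h2 : ∀ a b, y ≠ add a b) :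
    appNF w y = app w y := by
  cases y with
  | e => exact absurd rfl h1
  | add a b => exact absurd rfl (h2 a b)
  | d => rw [appNF] <;> simp
  | w => rw [appNF] <;> simp
  | app f c => rw [appNF] <;> simp

lemma appNF_app_other (f c y : Tm) (hf : f ≠ w) :
    appNF (app f c) y = app (app f c) y := by
  cases f with
  | w => exact absurd rfl hf
  | d => rw [appNF] <;> simp
  | e => rw [appNF] <;> simp
  | add a b => rw [appNF] <;> simp
  | app g h => rw [appNF] <;> simp

lemma appNF_addNF (x y z : Tm) :
    appNF (addNF x y) z = appNF y (appNF x z) := by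
  induction x generalizing y z with
  | e => simp
  | add a b iha ihb =>
      by_cases hy : y = e
      · subst hy; simp
      · rw [addNF_add a b y hy, iha, ihb, appNF_add]
  | d =>
      by_cases hy : y = e
      · subst hy; simp
      · rw [addNF_other d y (by simp) (by simp) hy, appNF_add]
  | w =>
      by_cases hy : y = e
      · subst hy; simp
      · rw [addNF_other w y (by simp) (by simp) hy, appNF_add]
  | app f c _ _ =>
      by_cases hy : y = e
      · subst hy; simp
      · rw [addNF_other (app f c) y (by simp) (by simp) hy, appNF_add]

lemma appNF_w_addNF (x y : Tm) :
    appNF w (addNF x y) = addNF (appNF w x) (appNF w y) := by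
  induction x generalizing y with
  | e => simp
  | add a b iha ihb =>
      by_cases hy : y = e
      · subst hy; simp
      · rw [addNF_add a b y hy, iha, ihb, appNF_w_add, addNF_assoc]
  | d =>
      by_cases hy : y = e
      · subst hy; simp
      · rw [addNF_other d y (by simp) (by simp) hy, appNF_w_add]
  | w =>
      by_cases hy : y = e
      · subst hy; simp
      · rw [addNF_other w y (by simp) (by simp) hy, appNF_w_add]
  | app f c _ _ =>
      by_cases hy : y = e
      · subst hy; simp
      · rw [addNF_other (app f c) y (by simp) (by simp) hy, appNF_w_add]

/-- heads allowed as left argument of a canonical `add` / argument of `app w`. -/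
def Hd (t : Tm) : Prop := t = d ∨ t = w ∨ ∃ a, t = app w a

inductive Canon : Tm → Prop
  | cd : Canon d
  | cw : Canon w
  | ce : Canon e
  | cadd {x y} : Canon x → Canon y → Hd x → y ≠ e → Canon (add x y)
  | capp {y} : Canon y → Hd y → Canon (app w y)

lemma Hd.ne_e {t : Tm} (h : Hd t) : t ≠ e := by
  rcases h with h | h | ⟨a, h⟩ <;> subst h <;> simp

lemma Hd.ne_add {t : Tm} (h : Hd t) : ∀ a b, t ≠ add a b := by
  rcases h with h | h | ⟨a, h⟩ <;> subst h <;> simp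

lemma canon_app_inv {f c : Tm} (h : Canon (app f c)) :
    f = w ∧ Canon c ∧ Hd c := by
  cases h with
  | capp hc hd => exact ⟨rfl, hc, hd⟩

lemma canon_addNF {x y : Tm} (hx : Canon x) (hy : Canon y) :
    Canon (addNF x y) := by
  induction x generalizing y with
  | e => simpa
  | add a b iha ihb =>
      by_cases hye : y = e
      · subst hye; simpa
      cases hx with
      | cadd ha hb hhd hne =>
          rw [addNF_add a b y hye]
          exact iha ha (ihb hb hy)
  | d =>
      by_cases hye : y = e
      · subst hye; simpa
      · rw [addNF_other d y (by simp) (by simp) hye]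
        exact Canon.cadd hx hy (Or.inl rfl) hye
  | w =>
      by_cases hye : y = e
      · subst hye; simpa
      · rw [addNF_other w y (by simp) (by simp) hye]
        exact Canon.cadd hx hy (Or.inr (Or.inl rfl)) hye
  | app f c _ _ =>
      by_cases hye : y = e
      · subst hye; simpa
      · rw [addNF_other (app f c) y (by simp) (by simp) hye]
        obtain ⟨hf, -, -⟩ := canon_app_inv hx
        subst hf
        exact Canon.cadd hx hy (Or.inr (Or.inr ⟨c, rfl⟩)) hye

lemma canon_appNF {x y : Tm} (hx : Canon x) (hy : Canon y) :
    Canon (appNF x y) := by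
  induction x, y using appNF.induct with
  | case1 a b y iha ihb =>
      cases hx with
      | cadd ha hb hhd hne =>
          rw [appNF_add]
          exact ihb hb (iha ha hy)
  | case2 y ihw =>
      rw [appNF_d]
      exact canon_addNF (ihw Canon.cw hy) hy
  | case3 y => simpa
  | case4 a b iha ihb =>
      cases hy with
      | cadd ha hb hhd hne =>
          rw [appNF_w_add]
          exact canon_addNF (iha Canon.cw ha) (ihb Canon.cw hb)
  | case5 => simp; exact Canon.ce
  | case6 a y =>
      obtain ⟨-, hc, -⟩ := canon_app_inv hx
      rw [appNF_wApp]
      exact canon_addNF hy hc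
  | case7 x y h1 h2 h3 h4 h5 h6 =>
      have hxw : x = w := by
        cases hx with
        | cd => exact absurd rfl h2
        | cw => rfl
        | ce => exact absurd rfl h3
        | cadd _ _ _ _ => exact absurd rfl (h1 _ _)
        | capp _ _ => exact absurd rfl (h6 _)
      subst hxw
      have hye : y ≠ e := fun h => h5 rfl h
      have hyadd : ∀ a b, y ≠ add a b := fun a b h => h4 a b rfl h
      rw [appNF_w_other y hye hyadd]
      refine Canon.capp hy ?_
      cases hy with
      | cd => exact Or.inl rfl
      | cw => exact Or.inr (Or.inl rfl)
      | ce => exact absurd rfl hye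
      | cadd _ _ _ _ => exact absurd rfl (hyadd _ _)
      | capp _ _ => exact Or.inr (Or.inr ⟨_, rfl⟩)

lemma canon_nf (t : Tm) : Canon (nf t) := by
  induction t with
  | d => exact Canon.cd
  | w => exact Canon.cw
  | e => exact Canon.ce
  | add a b iha ihb => exact canon_addNF iha ihb
  | app a b iha ihb => exact canon_appNF iha ihb

lemma wApp_key {x : Tm} (hx : Canon x) :
    ∀ y, appNF (appNF w x) y = addNF y x := by
  induction hx with
  | cd =>
      intro y
      rw [appNF_w_other d (by simp) (by simp), appNF_wApp]
  | cw =>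
      intro y
      rw [appNF_w_other w (by simp) (by simp), appNF_wApp]
  | ce => intro y; simp
  | cadd ha hb hhd hne iha ihb =>
      intro y
      rename_i a b
      rw [appNF_w_add, appNF_addNF, iha, ihb, addNF_assoc,
        addNF_other a b hhd.ne_e (hhd.ne_add) hne]
  | capp hc hhd ihc =>
      intro y
      rename_i c
      rw [appNF_w_other (app w c) (by simp) (by simp), appNF_wApp]

lemma nf_root {t u : Tm} (h : Root t u) : nf t = nf u := by
  cases h with
  | addE x => simp [nf]
  | eAdd x => simp [nf]
  | assoc x y z => simp only [nf]; rw [addNF_assoc]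
  | appAdd x y z => simp only [nf]; rw [appNF_addNF]
  | dx x => simp [nf]
  | appE x => simp [nf]
  | wAdd x y => simp only [nf]; rw [appNF_w_addNF]
  | wApp x y => simp only [nf]; rw [wApp_key (canon_nf x)]
  | wE => simp [nf]

lemma nf_step {t u : Tm} (h : Step t u) : nf t = nf u := by
  induction h with
  | root hr => exact nf_root hr
  | addL _ ih => simp only [nf, ih]
  | addR _ ih => simp only [nf, ih]
  | appL _ ih => simp only [nf, ih]
  | appR _ ih => simp only [nf, ih]

lemma nf_steps {t u : Tm} (h : Steps t u) : nf t = nf u := by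
  induction h with
  | refl => rfl
  | tail _ hstep ih => exact ih.trans (nf_step hstep)

lemma steps_addL {t t' : Tm} (h : Steps t t') (u : Tm) :
    Steps (add t u) (add t' u) :=
  Relation.ReflTransGen.lift (fun x => add x u) (fun _ _ hs => Step.addL hs) _ _ h

lemma steps_addR {u u' : Tm} (h : Steps u u') (t : Tm) :
    Steps (add t u) (add t u') :=
  Relation.ReflTransGen.lift (fun x => add t x) (fun _ _ hs => Step.addR hs) _ _ h

lemma steps_appL {t t' : Tm} (h : Steps t t') (u : Tm) :
    Steps (app t u) (app t' u) :=
  Relation.ReflTransGen.lift (fun x => app x u) (fun _ _ hs => Step.appL hs) _ _ h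

lemma steps_appR {u u' : Tm} (h : Steps u u') (t : Tm) :
    Steps (app t u) (app t u') :=
  Relation.ReflTransGen.lift (fun x => app t x) (fun _ _ hs => Step.appR hs) _ _ h

lemma steps_addNF (x y : Tm) : Steps (add x y) (addNF x y) := by
  induction x generalizing y with
  | e => rw [addNF_e_left]; exact .single (.root (.eAdd y))
  | add a b iha ihb =>
      by_cases hy : y = e
      · subst hy; rw [addNF_e_right]; exact .single (.root (.addE _))
      · rw [addNF_add a b y hy]
        exact (Relation.ReflTransGen.single (Step.root (Root.assoc a b y))).trans
          ((steps_addR (ihb y) a).trans (iha _))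
  | d =>
      by_cases hy : y = e
      · subst hy; rw [addNF_e_right]; exact .single (.root (.addE _))
      · rw [addNF_other d y (by simp) (by simp) hy]; exact .refl
  | w =>
      by_cases hy : y = e
      · subst hy; rw [addNF_e_right]; exact .single (.root (.addE _))
      · rw [addNF_other w y (by simp) (by simp) hy]; exact .refl
  | app f c _ _ =>
      by_cases hy : y = e
      · subst hy; rw [addNF_e_right]; exact .single (.root (.addE _))
      · rw [addNF_other (app f c) y (by simp) (by simp) hy]; exact .refl

lemma steps_appNF (x y : Tm) : Steps (app x y) (appNF x y) := by
  induction x, y using appNF.induct with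
  | case1 a b y iha ihb =>
      rw [appNF_add]
      exact (Relation.ReflTransGen.single (Step.root (Root.appAdd a b y))).trans
        ((steps_appR iha b).trans ihb)
  | case2 y ihw =>
      rw [appNF_d]
      exact (Relation.ReflTransGen.single (Step.root (Root.dx y))).trans
        ((steps_addL ihw y).trans (steps_addNF _ y))
  | case3 y => rw [appNF_e]; exact .single (.root (.appE y))
  | case4 a b iha ihb =>
      rw [appNF_w_add]
      exact (Relation.ReflTransGen.single (Step.root (Root.wAdd a b))).trans
        (((steps_addL iha _).trans (steps_addR ihb _)).trans (steps_addNF _ _))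
  | case5 => rw [appNF_w_e]; exact .single (.root .wE)
  | case6 a y =>
      rw [appNF_wApp]
      exact (Relation.ReflTransGen.single (Step.root (Root.wApp a y))).trans
        (steps_addNF y a)
  | case7 x y h1 h2 h3 h4 h5 h6 =>
      cases x with
      | d => exact absurd rfl h2
      | e => exact absurd rfl h3
      | add a b => exact absurd rfl (h1 a b)
      | w =>
          have hye : y ≠ e := fun h => h5 rfl h
          have hyadd : ∀ a b, y ≠ add a b := fun a b h => h4 a b rfl h
          rw [appNF_w_other y hye hyadd]; exact .refl
      | app f c =>
          by_cases hf : f = w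
          · subst hf; exact absurd rfl (h6 c)
          · rw [appNF_app_other f c y hf]; exact .refl

lemma steps_nf (t : Tm) : Steps t (nf t) := by
  induction t with
  | d => exact .refl
  | w => exact .refl
  | e => exact .refl
  | add a b iha ihb =>
      exact ((steps_addL iha b).trans (steps_addR ihb (nf a))).trans
        (steps_addNF (nf a) (nf b))
  | app a b iha ihb =>
      exact ((steps_appL iha b).trans (steps_appR ihb (nf a))).trans
        (steps_appNF (nf a) (nf b))

/-- the rewrite system R' is terminating and confluent. -/
theorem R'_terminating_confluent :
    (¬ ∃ f : ℕ → Tm, ∀ n : ℕ, Step (f n) (f (n + 1))) ∧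
    (∀ t u v : Tm, Steps t u → Steps t v → ∃ w : Tm, Steps u w ∧ Steps v w) := by
  refine ⟨no_infinite_chain, fun t u v hu hv => ⟨nf t, ?_, ?_⟩⟩
  · rw [nf_steps hu]; exact steps_nf u
  · rw [nf_steps hv]; exact steps_nf v
end

section
/- (Slattery's twins) In the equational theory E' over {d, w, e, +, ·}, the terms p = w·(d·(d+w)) and q = d·(d+w) satisfy p·e ≡ q and q·e ≡ p, and their normal forms under R' are distinct. -/
open Tm

section Aux
open Tm

/-- Successors by a root step. -/
def rootSuccs : Tm → List Tm
  | Tm.add a b =>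
      (if b = Tm.e then [a] else []) ++
      (if a = Tm.e then [b] else []) ++
      (match a with | Tm.add x y => [Tm.add x (Tm.add y b)] | _ => [])
  | Tm.app a b =>
      (match a with | Tm.add x y => [Tm.app y (Tm.app x b)] | _ => []) ++
      (if a = Tm.d then [Tm.add (Tm.app Tm.w b) b] else []) ++
      (if a = Tm.e then [b] else []) ++
      (if a = Tm.w then
        (match b with | Tm.add x y => [Tm.add (Tm.app Tm.w x) (Tm.app Tm.w y)] | _ => []) else []) ++
      (match a with | Tm.app Tm.w x => [Tm.add b x] | _ => []) ++
      (if a = Tm.w ∧ b = Tm.e then [Tm.e] else [])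
  | _ => []

/-- All one-step successors. -/
def succs : Tm → List Tm
  | Tm.add a b => rootSuccs (Tm.add a b) ++ (succs a).map (Tm.add · b) ++ (succs b).map (Tm.add a ·)
  | Tm.app a b => rootSuccs (Tm.app a b) ++ (succs a).map (Tm.app · b) ++ (succs b).map (Tm.app a ·)
  | t => rootSuccs t

lemma root_mem {t u : Tm} (h : Root t u) : u ∈ rootSuccs t := by
  cases h <;> simp [rootSuccs]

lemma rootSuccs_step {t u : Tm} (h : u ∈ rootSuccs t) : Step t u := by
  match t with
  | Tm.d | Tm.w | Tm.e => simp [rootSuccs] at h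
  | Tm.add a b =>
    simp only [rootSuccs, List.mem_append] at h
    rcases h with (h | h) | h
    · split_ifs at h <;> simp_all
      exact Step.root (Root.addE a)
    · split_ifs at h <;> simp_all
      exact Step.root (Root.eAdd b)
    · match a with
      | Tm.add x y => simp at h; subst h; exact Step.root (Root.assoc x y b)
      | Tm.d | Tm.w | Tm.e | Tm.app _ _ => simp at h
  | Tm.app a b =>
    simp only [rootSuccs, List.mem_append] at h
    rcases h with ((((h | h) | h) | h) | h) | h
    · match a with
      | Tm.add x y => simp at h; subst h; exact Step.root (Root.appAdd x y b)
      | Tm.d | Tm.w | Tm.e | Tm.app _ _ => simp at h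
    · split_ifs at h <;> simp_all
      exact Step.root (Root.dx b)
    · split_ifs at h <;> simp_all
      exact Step.root (Root.appE b)
    · split_ifs at h with hw
      · subst hw
        match b with
        | Tm.add x y => simp at h; subst h; exact Step.root (Root.wAdd x y)
        | Tm.d | Tm.w | Tm.e | Tm.app _ _ => simp at h
      · simp at h
    · match a with
      | Tm.app Tm.w x => simp at h; subst h; exact Step.root (Root.wApp x b)
      | Tm.d | Tm.w | Tm.e | Tm.add _ _
      | Tm.app Tm.d _ | Tm.app Tm.e _ | Tm.app (Tm.add _ _) _ | Tm.app (Tm.app _ _) _ => simp [rootSuccs] at h ⊢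
    · split_ifs at h with hc
      · obtain ⟨h1, h2⟩ := hc; subst h1; subst h2; simp at h; subst h
        exact Step.root Root.wE
      · simp at h

lemma step_mem : ∀ {t u : Tm}, Step t u → u ∈ succs t := by
  intro t u h
  induction h with
  | root h =>
    have := root_mem h
    cases h <;> simp [succs] <;> simp [rootSuccs] at this ⊢
  | addL _ ih => simp [succs]; tauto
  | addR _ ih => simp [succs]; tauto
  | appL _ ih => simp [succs]; tauto
  | appR _ ih => simp [succs]; tauto

lemma mem_step : ∀ {t u : Tm}, u ∈ succs t → Step t u := by
  intro t
  induction t with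
  | d => intro u h; simp [succs, rootSuccs] at h
  | w => intro u h; simp [succs, rootSuccs] at h
  | e => intro u h; simp [succs, rootSuccs] at h
  | add a b iha ihb =>
    intro u h
    simp only [succs, List.mem_append, List.mem_map] at h
    rcases h with (h | ⟨v, hv, rfl⟩) | ⟨v, hv, rfl⟩
    · exact rootSuccs_step h
    · exact Step.addL (iha hv)
    · exact Step.addR (ihb hv)
  | app a b iha ihb =>
    intro u h
    simp only [succs, List.mem_append, List.mem_map] at h
    rcases h with (h | ⟨v, hv, rfl⟩) | ⟨v, hv, rfl⟩
    · exact rootSuccs_step h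
    · exact Step.appL (iha hv)
    · exact Step.appR (ihb hv)

lemma nf_succs {t : Tm} (h : NormalForm t) : succs t = [] := by
  rcases hs : succs t with _ | ⟨u, l⟩
  · rfl
  · exact absurd (mem_step (hs ▸ (List.mem_cons_self : u ∈ u :: l))) (h u)

def Rp : List Tm := [ (app w (app d (add d w))),
  (app w (add (app w (add d w)) (add d w))),
  (add (app w (app w (add d w))) (app w (add d w))),
  (app w (add (add (app w d) (app w w)) (add d w))),
  (add (app w (add (app w d) (app w w))) (app w (add d w))),
  (add (app w (app w (add d w))) (add (app w d) (app w w))),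
  (app w (add (app w d) (add (app w w) (add d w)))),
  (add (add (app w (app w d)) (app w (app w w))) (app w (add d w))),
  (add (app w (add (app w d) (app w w))) (add (app w d) (app w w))),
  (add (app w (app w d)) (app w (add (app w w) (add d w)))),
  (add (app w (app w d)) (add (app w (app w w)) (app w (add d w)))),
  (add (add (app w (app w d)) (app w (app w w))) (add (app w d) (app w w))),
  (add (app w (app w d)) (add (app w (app w w)) (add (app w d) (app w w)))) ]
def Rq : List Tm := [ (app d (add d w)),
  (add (app w (add d w)) (add d w)),
  (add (add (app w d) (app w w)) (add d w)),
  (add (app w d) (add (app w w) (add d w))) ]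

lemma closed_Rp : ∀ t ∈ Rp, ∀ u ∈ succs t, u ∈ Rp := by decide
lemma closed_Rq : ∀ t ∈ Rq, ∀ u ∈ succs t, u ∈ Rq := by decide

lemma reach_closed {R : List Tm} (hc : ∀ t ∈ R, ∀ u ∈ succs t, u ∈ R)
    {s t : Tm} (hs : s ∈ R) (h : Steps s t) : t ∈ R := by
  induction h with
  | refl => exact hs
  | tail _ hst ih => exact hc _ ih _ (step_mem hst)

end Aux

open Tm in
theorem slattery_twins' :
    TermEq (app (app w (app d (add d w))) e) (app d (add d w)) ∧
    TermEq (app (app d (add d w)) e) (app w (app d (add d w))) ∧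
    (∀ np nq : Tm,
      Steps (app w (app d (add d w))) np → NormalForm np →
      Steps (app d (add d w)) nq → NormalForm nq → np ≠ nq) := by
  refine ⟨?_, ?_, ?_⟩
  · exact Relation.EqvGen.trans _ _ _
      (Relation.EqvGen.rel _ _ (Step.root (Root.wApp _ _)))
      (Relation.EqvGen.rel _ _ (Step.root (Root.eAdd _)))
  · exact Relation.EqvGen.trans _ _ _
      (Relation.EqvGen.rel _ _ (Step.appL (Step.root (Root.dx _))))
      (Relation.EqvGen.trans _ _ _
        (Relation.EqvGen.rel _ _ (Step.root (Root.appAdd _ _ _)))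
        (Relation.EqvGen.trans _ _ _
          (Relation.EqvGen.rel _ _ (Step.root (Root.appAdd _ _ _)))
          (Relation.EqvGen.trans _ _ _
            (Relation.EqvGen.rel _ _ (Step.appR (Step.appR (Step.root (Root.wApp _ _)))))
            (Relation.EqvGen.rel _ _ (Step.appR (Step.appR (Step.root (Root.eAdd _))))))))
  · intro np nq hp hnp hq hnq
    have hp' : np ∈ Rp := reach_closed closed_Rp (by decide) hp
    have hq' : nq ∈ Rq := reach_closed closed_Rq (by decide) hq
    have hnp' := nf_succs hnp
    have hnq' := nf_succs hnq
    have : np = add (app w (app w d)) (add (app w (app w w)) (add (app w d) (app w w))) := by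
      fin_cases hp' <;> first | rfl | (exfalso; revert hnp'; decide)
    subst this
    have : nq = add (app w d) (add (app w w) (add d w)) := by
      fin_cases hq' <;> first | rfl | (exfalso; revert hnq'; decide)
    subst this
    decide
/-- Slattery's twins: p = w·(d·(d+w)) and q = d·(d+w) satisfy
p·e ≡ q and q·e ≡ p, and their normal forms are distinct. -/
theorem slattery_twins :
    TermEq (app (app w (app d (add d w))) e) (app d (add d w)) ∧
    TermEq (app (app d (add d w)) e) (app w (app d (add d w))) ∧
    (∀ np nq : Tm,
      Steps (app w (app d (add d w))) np → NormalForm np →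
      Steps (app d (add d w)) nq → NormalForm nq → np ≠ nq) :=
  slattery_twins'
end

section
/- (Slattery's 3-cycle) In the equational theory E' over {d, w, e, +, ·}, letting p = (d+w+w)·(d+w+w) (sums right-associated), the three terms p, w·(d·(d+w+w)), and d·(d+w+w) form a 3-cycle under application to e: p·e ≡ w·(d·(d+w+w)), (w·(d·(d+w+w)))·e ≡ d·(d+w+w), and (d·(d+w+w))·e ≡ p. -/
open Tm

lemma termEq_of_step {a b : Tm} (h : Step a b) : TermEq a b := Relation.EqvGen.rel _ _ h

lemma termEq_trans {a b c : Tm} (h1 : TermEq a b) (h2 : TermEq b c) : TermEq a c :=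
  Relation.EqvGen.trans _ _ _ h1 h2

/-- Slattery's 3-cycle: with p = (d+(w+w))·(d+(w+w)),
the terms p, w·(d·(d+(w+w))), d·(d+(w+w)) form a 3-cycle under
application to e. -/
theorem slattery_three_cycle :
    TermEq (app (app (add d (add w w)) (add d (add w w))) e)
      (app w (app d (add d (add w w)))) ∧
    TermEq (app (app w (app d (add d (add w w)))) e)
      (app d (add d (add w w))) ∧
    TermEq (app (app d (add d (add w w))) e)
      (app (add d (add w w)) (add d (add w w))) := by
  refine ⟨?_, ?_, ?_⟩
  · -- (s·s)·e ≡ w·(d·s)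
    refine termEq_trans (termEq_of_step (Step.appL (Step.root (Root.appAdd d (add w w) _)))) ?_
    refine termEq_trans (termEq_of_step (Step.appL (Step.root (Root.appAdd w w _)))) ?_
    refine termEq_trans (termEq_of_step (Step.root (Root.wApp _ _))) ?_
    exact termEq_of_step (Step.root (Root.eAdd _))
  · refine termEq_trans (termEq_of_step (Step.root (Root.wApp _ _))) ?_
    exact termEq_of_step (Step.root (Root.eAdd _))
  · refine termEq_trans (termEq_of_step (Step.appL (Step.root (Root.dx _)))) ?_
    refine termEq_trans (termEq_of_step (Step.root (Root.appAdd _ _ _))) ?_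
    refine termEq_trans (termEq_of_step (Step.appR (Step.root (Root.wApp _ _)))) ?_
    exact termEq_of_step (Step.appR (Step.root (Root.eAdd _)))
end
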